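/- Let S be a commutative monoid written additively, let n ≥ 1, and let P : S → ℝ be a homogeneous polynomial of degree n on S. Then for every x ∈ S and all a₁,…,a_n ∈ S, the quantity MP(a₁,…,a_n) = (1/n!) · Σ_{I ⊆ {1,…,n}} (−1)^{n−|I|} · P(x + Σ_{i∈I} aᵢ) (the sum running over all subsets I of {1,…,n}, including the empty set) is independent of the choice of x, and the function MP : Sⁿ → ℝ so defined is an n-polarization of P: it agrees with P on the diagonal, is symmetric under permutations of its arguments, and is additive in each argument. -/

import Mathlib

namespace PolarizationAux



open Finset

variable {m n : ℕ}

noncomputable def ind (T : Finset (Fin m)) : Fin m →₀ ℕ :=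
  Finsupp.equivFunOnFinite.symm fun j => if j ∈ T then 1 else 0

lemma ind_apply (T : Finset (Fin m)) (j : Fin m) :
    ind T j = if j ∈ T then 1 else 0 := rfl

lemma sum_eq_of_mem_support {p : MvPolynomial (Fin m) ℝ} (hp : p.IsHomogeneous n)
    {α : Fin m →₀ ℕ} (hα : α ∈ p.support) : ∑ j, α j = n := by
  have h := hp (MvPolynomial.mem_support_iff.mp hα)
  change (Finsupp.weight (fun _ => (1:ℕ))) α = n at h
  rw [← Finsupp.degree_eq_weight_one] at h
  rw [← h, Finsupp.degree]
  exact (Finset.sum_subset (Finset.subset_univ _)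
    (fun x _ hx => Finsupp.notMem_support_iff.mp hx)).symm

lemma powerset_map {α β : Type*} (e : α ↪ β) (s : Finset α) :
    (s.map e).powerset = s.powerset.map (Finset.mapEmbedding e).toEmbedding := by
  ext J
  simp only [Finset.mem_powerset, Finset.mem_map, RelEmbedding.coe_toEmbedding,
    Finset.mapEmbedding_apply]
  constructor
  · intro h
    obtain ⟨u, hu, rfl⟩ := Finset.subset_map_iff.mp h
    exact ⟨u, hu, rfl⟩
  · rintro ⟨u, hu, rfl⟩
    exact Finset.map_subset_map.mpr hu

lemma neg_one_pow_sub {a b : ℕ} (h : b ≤ a) : (-1 : ℝ) ^ (a - b) = (-1) ^ a * (-1) ^ b := by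
  obtain ⟨d, rfl⟩ := Nat.exists_eq_add_of_le h
  rw [Nat.add_sub_cancel_left, pow_add, mul_comm ((-1 : ℝ) ^ b), mul_assoc, ← pow_add,
    ← two_mul, pow_mul]
  norm_num

lemma AS_expand (p : MvPolynomial (Fin m) ℝ) (T : Finset (Fin m)) (k : Fin m → ℕ) :
    ∑ I ∈ T.powerset, (-1 : ℝ) ^ (T.card - I.card) *
        MvPolynomial.eval (fun j => (k j : ℝ) + if j ∈ I then 1 else 0) p
      = ∑ α ∈ p.support, MvPolynomial.coeff α p *
          ((∏ j ∈ T, (((k j : ℝ) + 1) ^ (α j) - (k j : ℝ) ^ (α j))) *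
            ∏ j ∈ Tᶜ, (k j : ℝ) ^ (α j)) := by
  have hU : ∀ I ∈ T.powerset, ∀ α : Fin m →₀ ℕ,
      (∏ j, ((k j : ℝ) + if j ∈ I then 1 else 0) ^ α j)
        = ((∏ j ∈ I, ((k j : ℝ) + 1) ^ α j) * ∏ j ∈ T \ I, (k j : ℝ) ^ α j) *
            ∏ j ∈ Tᶜ, (k j : ℝ) ^ α j := by
    intro I hI α
    have hsub := Finset.mem_powerset.mp hI
    rw [← Finset.prod_mul_prod_compl T (fun j => ((k j : ℝ) + if j ∈ I then 1 else 0) ^ α j)]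
    congr 1
    · rw [← Finset.prod_sdiff hsub, mul_comm]
      congr 1
      · exact Finset.prod_congr rfl fun j hj => by rw [if_pos hj]
      · exact Finset.prod_congr rfl fun j hj => by
          rw [if_neg (Finset.mem_sdiff.mp hj).2, add_zero]
    · exact Finset.prod_congr rfl fun j hj => by
        rw [if_neg fun h => (Finset.mem_compl.mp hj) (hsub h), add_zero]
  have hR : ∀ α : Fin m →₀ ℕ,
      (∏ j ∈ T, (((k j : ℝ) + 1) ^ α j - (k j : ℝ) ^ α j))
        = ∑ I ∈ T.powerset, (∏ j ∈ I, ((k j : ℝ) + 1) ^ α j) *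
            ((-1 : ℝ) ^ (T.card - I.card) * ∏ j ∈ T \ I, (k j : ℝ) ^ α j) := by
    intro α
    simp_rw [sub_eq_add_neg]
    rw [Finset.prod_add]
    refine Finset.sum_congr rfl fun I hI => ?_
    have : ∀ j ∈ T \ I, -((k j : ℝ) ^ α j) = (-1) * ((k j : ℝ) ^ α j) := fun j _ => by ring
    rw [Finset.prod_congr rfl this, Finset.prod_mul_distrib, Finset.prod_const,
      Finset.card_sdiff_of_subset (Finset.mem_powerset.mp hI)]
  calc
    ∑ I ∈ T.powerset, (-1 : ℝ) ^ (T.card - I.card) *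
        MvPolynomial.eval (fun j => (k j : ℝ) + if j ∈ I then 1 else 0) p
      = ∑ I ∈ T.powerset, ∑ α ∈ p.support, (-1 : ℝ) ^ (T.card - I.card) *
          (MvPolynomial.coeff α p * ∏ j, ((k j : ℝ) + if j ∈ I then 1 else 0) ^ α j) := by
        refine Finset.sum_congr rfl fun I _ => ?_
        rw [MvPolynomial.eval_eq', Finset.mul_sum]
    _ = ∑ α ∈ p.support, ∑ I ∈ T.powerset, (-1 : ℝ) ^ (T.card - I.card) *
          (MvPolynomial.coeff α p * ∏ j, ((k j : ℝ) + if j ∈ I then 1 else 0) ^ α j) :=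
        Finset.sum_comm
    _ = _ := by
        refine Finset.sum_congr rfl fun α hα => ?_
        rw [hR α, Finset.sum_mul, Finset.mul_sum]
        refine Finset.sum_congr rfl fun I hI => ?_
        rw [hU I hI α]
        ring

lemma AS_vanish {p : MvPolynomial (Fin m) ℝ} (hp : p.IsHomogeneous n)
    {T : Finset (Fin m)} (hT : n < T.card) (k : Fin m → ℕ) :
    ∑ I ∈ T.powerset, (-1 : ℝ) ^ (T.card - I.card) *
        MvPolynomial.eval (fun j => (k j : ℝ) + if j ∈ I then 1 else 0) p = 0 := by
  rw [AS_expand]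
  refine Finset.sum_eq_zero fun α hα => ?_
  obtain ⟨j, hjT, hj0⟩ : ∃ j ∈ T, α j = 0 := by
    by_contra h
    push_neg at h
    have h1 : ∀ j ∈ T, 1 ≤ α j := fun j hj => Nat.one_le_iff_ne_zero.mpr (h j hj)
    have h2 : T.card ≤ ∑ j ∈ T, α j := by
      simpa using Finset.sum_le_sum h1
    have h3 : ∑ j ∈ T, α j ≤ ∑ j, α j :=
      Finset.sum_le_sum_of_subset (Finset.subset_univ T)
    have h4 := sum_eq_of_mem_support hp hα
    omega
  have hz : (((k j : ℝ) + 1) ^ (α j) - (k j : ℝ) ^ (α j)) = 0 := by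
    rw [hj0]; simp
  rw [Finset.prod_eq_zero hjT hz]
  ring

lemma AS_const {p : MvPolynomial (Fin m) ℝ} (hp : p.IsHomogeneous n)
    {T : Finset (Fin m)} (hT : T.card = n) (k : Fin m → ℕ) :
    ∑ I ∈ T.powerset, (-1 : ℝ) ^ (T.card - I.card) *
        MvPolynomial.eval (fun j => (k j : ℝ) + if j ∈ I then 1 else 0) p
      = MvPolynomial.coeff (ind T) p := by
  rw [AS_expand]
  rw [Finset.sum_eq_single (ind T)]
  · have h1 : (∏ j ∈ T, (((k j : ℝ) + 1) ^ ((ind T) j) - (k j : ℝ) ^ ((ind T) j))) = 1 :=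
      Finset.prod_eq_one fun j hj => by rw [ind_apply, if_pos hj]; simp
    have h2 : (∏ j ∈ Tᶜ, ((k j : ℝ)) ^ ((ind T) j)) = 1 :=
      Finset.prod_eq_one fun j hj => by rw [ind_apply, if_neg (Finset.mem_compl.mp hj)]; simp
    rw [h1, h2, mul_one, mul_one]
  · intro α hα hne
    by_cases hz : ∃ j ∈ T, α j = 0
    · obtain ⟨j, hjT, hj0⟩ := hz
      have hzz : (((k j : ℝ) + 1) ^ (α j) - (k j : ℝ) ^ (α j)) = 0 := by rw [hj0]; simp
      rw [Finset.prod_eq_zero hjT hzz]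
      ring
    · exfalso
      apply hne
      push_neg at hz
      have h1 : ∀ j ∈ T, 1 ≤ α j := fun j hj => Nat.one_le_iff_ne_zero.mpr (hz j hj)
      have h4 := sum_eq_of_mem_support hp hα
      have hsplit : ∑ j ∈ T, α j + ∑ j ∈ Tᶜ, α j = n := by
        rw [Finset.sum_add_sum_compl]; exact h4
      have h2 : T.card ≤ ∑ j ∈ T, α j := by simpa using Finset.sum_le_sum h1
      have hTeq : ∑ j ∈ T, (1 : ℕ) = ∑ j ∈ T, α j := by
        have hc : ∑ j ∈ Tᶜ, α j = 0 ∨ True := Or.inr trivial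
        have : ∑ j ∈ T, α j ≤ n := le_trans (Nat.le_add_right _ _) (le_of_eq hsplit)
        simp only [Finset.sum_const, smul_eq_mul, mul_one]
        omega
      have hone : ∀ j ∈ T, α j = 1 :=
        fun j hj => ((Finset.sum_eq_sum_iff_of_le h1).mp hTeq j hj).symm
      have hcz : ∀ j ∈ Tᶜ, α j = 0 := by
        have : ∑ j ∈ Tᶜ, α j = 0 := by omega
        exact fun j hj => (Finset.sum_eq_zero_iff.mp this) j hj
      ext j
      rw [ind_apply]
      by_cases hj : j ∈ T
      · rw [if_pos hj]; exact hone j hj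
      · rw [if_neg hj]; exact hcz j (Finset.mem_compl.mpr hj)
  · intro h
    rw [MvPolynomial.notMem_support_iff.mp h]
    ring

lemma eval_indicator {S : Type*} [AddCommMonoid S] {P : S → ℝ} {c : Fin m → S}
    {p : MvPolynomial (Fin m) ℝ}
    (hev : ∀ k : Fin m → ℕ, P (∑ i, k i • c i) = MvPolynomial.eval (fun i => (k i : ℝ)) p)
    (b : Fin m → ℕ) (J : Finset (Fin m)) :
    P ((∑ i, b i • c i) + ∑ j ∈ J, c j)
      = MvPolynomial.eval (fun j => (b j : ℝ) + if j ∈ J then 1 else 0) p := by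
  have h := hev (fun j => b j + if j ∈ J then 1 else 0)
  have hl : ∑ i, (b i + if i ∈ J then 1 else 0) • c i = (∑ i, b i • c i) + ∑ j ∈ J, c j := by
    simp only [add_smul, ite_smul, one_smul, zero_smul, Finset.sum_add_distrib]
    rw [Finset.sum_ite_mem, Finset.univ_inter]
  rw [hl] at h
  rw [h]
  have hfun : (fun i => ((b i + if i ∈ J then 1 else 0 : ℕ) : ℝ))
      = fun j => (b j : ℝ) + if j ∈ J then 1 else 0 := by
    funext j
    split_ifs with hj <;> simp
  rw [hfun]

lemma coeff_ind_univ (n : ℕ) :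
    MvPolynomial.coeff (ind (univ : Finset (Fin n)))
        ((∑ i : Fin n, MvPolynomial.X i : MvPolynomial (Fin n) ℝ) ^ n)
      = n.factorial := by
  rw [Finset.sum_pow_eq_sum_piAntidiag]
  rw [MvPolynomial.coeff_sum]
  have hmon : ∀ k : Fin n → ℕ, (∏ i, (MvPolynomial.X i : MvPolynomial (Fin n) ℝ) ^ k i)
      = MvPolynomial.monomial (Finsupp.equivFunOnFinite.symm k) 1 := by
    intro k
    rw [← MvPolynomial.prod_X_pow_eq_monomial]
    refine (Finset.prod_subset (Finset.subset_univ _) fun x _ hx => ?_).symm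
    have h0 : (Finsupp.equivFunOnFinite.symm k) x = 0 := Finsupp.notMem_support_iff.mp hx
    show (MvPolynomial.X x : MvPolynomial (Fin n) ℝ) ^ (Finsupp.equivFunOnFinite.symm k) x = 1
    rw [h0, pow_zero]
  rw [Finset.sum_eq_single (fun _ => (1 : ℕ))]
  · have hmem : ((fun _ => 1 : Fin n → ℕ)) ∈ piAntidiag (univ : Finset (Fin n)) n := by
      rw [Finset.mem_piAntidiag]
      constructor
      · simp
      · intro i _; exact Finset.mem_univ i
    rw [hmon, ← map_natCast (MvPolynomial.C (σ := Fin n) (R := ℝ)),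
      MvPolynomial.coeff_C_mul, MvPolynomial.coeff_monomial, if_pos]
    · rw [mul_one]
      have hspec := Nat.multinomial_spec (univ : Finset (Fin n)) (fun _ => (1 : ℕ))
      simp only [Nat.factorial_one, Finset.prod_const_one, one_mul, Finset.sum_const,
        smul_eq_mul, mul_one, Finset.card_univ, Fintype.card_fin] at hspec
      rw [hspec]
    · ext j
      show (1 : ℕ) = if j ∈ (univ : Finset (Fin n)) then 1 else 0
      simp
  · intro k hk hne
    rw [hmon, ← map_natCast (MvPolynomial.C (σ := Fin n) (R := ℝ)),
      MvPolynomial.coeff_C_mul, MvPolynomial.coeff_monomial, if_neg, mul_zero]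
    intro heq
    apply hne
    funext j
    have hj := DFunLike.congr_fun heq j
    show k j = 1
    simpa [ind] using hj
  · intro h
    exfalso
    apply h
    rw [Finset.mem_piAntidiag]
    exact ⟨by simp, fun i _ => Finset.mem_univ i⟩

lemma alt_sum_pow (n : ℕ) :
    ∑ I : Finset (Fin n), (-1 : ℝ) ^ (n - I.card) * (I.card : ℝ) ^ n
      = n.factorial := by
  have hq : ((∑ i : Fin n, MvPolynomial.X i : MvPolynomial (Fin n) ℝ) ^ n).IsHomogeneous n := by
    have h1 : (∑ i : Fin n, MvPolynomial.X i : MvPolynomial (Fin n) ℝ).IsHomogeneous 1 :=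
      MvPolynomial.IsHomogeneous.sum _ _ _ fun i _ => MvPolynomial.isHomogeneous_X _ _
    simpa using h1.pow n
  have h := AS_const hq (T := (univ : Finset (Fin n))) (by simp) (fun _ => 0)
  rw [coeff_ind_univ] at h
  rw [← h, ← Finset.powerset_univ]
  refine Finset.sum_congr rfl fun I _ => ?_
  rw [Finset.card_univ, Fintype.card_fin]
  congr 1
  rw [map_pow, map_sum]
  congr 1
  simp only [MvPolynomial.eval_X, Nat.cast_zero, zero_add]
  rw [Finset.sum_ite_mem, Finset.univ_inter, Finset.sum_const]
  simp

lemma part2 {S : Type*} [AddCommMonoid S] (n : ℕ) (P : S → ℝ)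
    (hP : ∀ (m : ℕ) (a : Fin m → S), ∃ p : MvPolynomial (Fin m) ℝ, p.IsHomogeneous n ∧
      ∀ k : Fin m → ℕ, P (∑ i, k i • a i) = MvPolynomial.eval (fun i => (k i : ℝ)) p)
    (a : S) :
    (n.factorial : ℝ)⁻¹ *
      ∑ I : Finset (Fin n), (-1 : ℝ) ^ (n - I.card) * P (0 + ∑ i ∈ I, a) = P a := by
  obtain ⟨q, hq, hev⟩ := hP 1 (fun _ => a)
  set c : ℝ := ∑ α ∈ q.support, MvPolynomial.coeff α q with hc
  have hval : ∀ k : ℕ, P (k • a) = c * (k : ℝ) ^ n := by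
    intro k
    have h := hev (fun _ => k)
    rw [Fin.sum_univ_one] at h
    rw [h, MvPolynomial.eval_eq', hc, Finset.sum_mul]
    refine Finset.sum_congr rfl fun α hα => ?_
    rw [Fin.prod_univ_one]
    have hs := sum_eq_of_mem_support hq hα
    rw [Fin.sum_univ_one] at hs
    rw [hs]
  have hPa : P a = c := by
    have h := hval 1
    simpa using h
  have hsum : ∀ I : Finset (Fin n), P (0 + ∑ _i ∈ I, a) = c * (I.card : ℝ) ^ n := by
    intro I
    rw [zero_add, Finset.sum_const, hval]
  calc (n.factorial : ℝ)⁻¹ * ∑ I : Finset (Fin n), (-1 : ℝ) ^ (n - I.card) * P (0 + ∑ i ∈ I, a)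
      = (n.factorial : ℝ)⁻¹ * ∑ I : Finset (Fin n), c * ((-1 : ℝ) ^ (n - I.card) * (I.card : ℝ) ^ n) := by
        congr 1
        exact Finset.sum_congr rfl fun I _ => by rw [hsum I]; ring
    _ = (n.factorial : ℝ)⁻¹ * (c * (n.factorial : ℝ)) := by
        rw [← Finset.mul_sum, alt_sum_pow]
    _ = c := by
        field_simp
    _ = P a := hPa.symm

lemma part3 {S : Type*} [AddCommMonoid S] (n : ℕ) (P : S → ℝ)
    (σ : Equiv.Perm (Fin n)) (a : Fin n → S) :
    ∑ I : Finset (Fin n), (-1 : ℝ) ^ (n - I.card) * P (0 + ∑ i ∈ I, (a ∘ σ) i)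
      = ∑ I : Finset (Fin n), (-1 : ℝ) ^ (n - I.card) * P (0 + ∑ i ∈ I, a i) := by
  refine Fintype.sum_equiv (Equiv.finsetCongr σ) _ _ fun I => ?_
  simp only [Equiv.finsetCongr_apply, Finset.card_map]
  congr 2
  rw [Finset.sum_map]
  rfl

lemma sum_single_smul {S : Type*} [AddCommMonoid S] (c : Fin m → S) (t : Fin m) :
    ∑ j, (if j = t then 1 else 0 : ℕ) • c j = c t := by
  simp only [ite_smul, one_smul, zero_smul]
  rw [Finset.sum_ite_eq' univ t c]
  simp

lemma part1 {S : Type*} [AddCommMonoid S] (n : ℕ) (P : S → ℝ)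
    (hP : ∀ (m : ℕ) (a : Fin m → S), ∃ p : MvPolynomial (Fin m) ℝ, p.IsHomogeneous n ∧
      ∀ k : Fin m → ℕ, P (∑ i, k i • a i) = MvPolynomial.eval (fun i => (k i : ℝ)) p)
    (x y : S) (a : Fin n → S) :
    ∑ I : Finset (Fin n), (-1 : ℝ) ^ (n - I.card) * P (x + ∑ i ∈ I, a i)
      = ∑ I : Finset (Fin n), (-1 : ℝ) ^ (n - I.card) * P (y + ∑ i ∈ I, a i) := by
  set c : Fin (n + 2) → S := Fin.cons x (Fin.cons y a) with hcdef
  obtain ⟨p, hp, hev⟩ := hP (n + 2) c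
  set e : Fin n ↪ Fin (n + 2) :=
    ⟨fun i => i.succ.succ, fun i j h => by
      exact Fin.succ_injective _ (Fin.succ_injective _ h)⟩ with hedef
  set T : Finset (Fin (n + 2)) := univ.map e with hTdef
  have hTcard : T.card = n := by simp [hTdef]
  have main : ∀ b : Fin (n + 2) → ℕ,
      ∑ J ∈ T.powerset, (-1 : ℝ) ^ (T.card - J.card) *
          MvPolynomial.eval (fun j => (b j : ℝ) + if j ∈ J then 1 else 0) p
        = ∑ I : Finset (Fin n), (-1 : ℝ) ^ (n - I.card) *
            P ((∑ j, b j • c j) + ∑ i ∈ I, a i) := by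
    intro b
    rw [hTdef, powerset_map, Finset.sum_map, Finset.powerset_univ]
    refine Finset.sum_congr rfl fun I _ => ?_
    rw [RelEmbedding.coe_toEmbedding, Finset.mapEmbedding_apply]
    simp only [Finset.card_map, Finset.card_univ, Fintype.card_fin]
    have hsum : ∑ j ∈ I.map e, c j = ∑ i ∈ I, a i := by
      rw [Finset.sum_map]
      refine Finset.sum_congr rfl fun i _ => ?_
      show c (Fin.succ (Fin.succ i)) = a i
      rw [hcdef]
      simp [Fin.cons_succ]
    rw [← eval_indicator hev b (I.map e), hsum]
  have hx0 : ∑ j, (if j = (0 : Fin (n + 2)) then 1 else 0 : ℕ) • c j = x := by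
    rw [sum_single_smul c 0, hcdef, Fin.cons_zero]
  have hy0 : ∑ j, (if j = Fin.succ (0 : Fin (n + 1)) then 1 else 0 : ℕ) • c j = y := by
    rw [sum_single_smul c _, hcdef, Fin.cons_succ, Fin.cons_zero]
  have mx := main (fun j => if j = (0 : Fin (n + 2)) then 1 else 0)
  have my := main (fun j => if j = Fin.succ (0 : Fin (n + 1)) then 1 else 0)
  rw [hx0] at mx
  rw [hy0] at my
  rw [← mx, ← my]
  rw [AS_const hp hTcard, AS_const hp hTcard]

lemma part4 {S : Type*} [AddCommMonoid S] (n : ℕ) (hn : 1 ≤ n) (P : S → ℝ)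
    (hP : ∀ (m : ℕ) (a : Fin m → S), ∃ p : MvPolynomial (Fin m) ℝ, p.IsHomogeneous n ∧
      ∀ k : Fin m → ℕ, P (∑ i, k i • a i) = MvPolynomial.eval (fun i => (k i : ℝ)) p)
    (a : Fin n → S) (i : Fin n) (x y : S) :
    ∑ I : Finset (Fin n), (-1 : ℝ) ^ (n - I.card) * P (0 + ∑ j ∈ I, Function.update a i (x + y) j)
      = (∑ I : Finset (Fin n), (-1 : ℝ) ^ (n - I.card) * P (0 + ∑ j ∈ I, Function.update a i x j))
        + ∑ I : Finset (Fin n), (-1 : ℝ) ^ (n - I.card) * P (0 + ∑ j ∈ I, Function.update a i y j) := by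
  classical
  set b : Fin n → S := Function.update a i x with hbdef
  set c : Fin (n + 1) → S := Fin.snoc b y with hcdef
  obtain ⟨p, hp, hev⟩ := hP (n + 1) c
  set ce : Fin n ↪ Fin (n + 1) := ⟨Fin.castSucc, Fin.castSucc_injective n⟩ with hcedef
  set i' : Fin (n + 1) := Fin.castSucc i with hi'def
  set ℓ : Fin (n + 1) := Fin.last n with hldef
  set D : Finset (Fin n) := (univ : Finset (Fin n)).erase i with hDdef
  set g : Finset (Fin (n + 1)) → ℝ :=
    fun J => MvPolynomial.eval (fun j => if j ∈ J then (1 : ℝ) else 0) p with hgdef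
  have hiD : i ∉ D := Finset.notMem_erase i univ
  have hD : insert i D = univ := Finset.insert_erase (Finset.mem_univ i)
  have hDcard : D.card = n - 1 := by
    rw [hDdef, Finset.card_erase_of_mem (Finset.mem_univ i)]
    simp
  have hlm : ℓ ∉ D.map ce := by
    simp only [Finset.mem_map, hcedef, Function.Embedding.coeFn_mk]
    rintro ⟨t, -, ht⟩
    exact (Fin.castSucc_lt_last t).ne ht
  have him : i' ∉ D.map ce := by
    simp only [Finset.mem_map, hcedef, Function.Embedding.coeFn_mk]
    rintro ⟨t, htD, ht⟩
    exact hiD (by rwa [Fin.castSucc_injective n ht] at htD)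
  have hil : i' ≠ ℓ := (Fin.castSucc_lt_last i).ne
  have huniv : (univ : Finset (Fin (n + 1))) = insert i' (insert ℓ (D.map ce)) := by
    ext j
    simp only [Finset.mem_univ, true_iff, Finset.mem_insert, Finset.mem_map, hcedef,
      Function.Embedding.coeFn_mk]
    refine Fin.lastCases ?_ ?_ j
    · exact Or.inr (Or.inl rfl)
    · intro t
      by_cases ht : t = i
      · exact Or.inl (by rw [ht, hi'def])
      · exact Or.inr (Or.inr ⟨t, Finset.mem_erase.mpr ⟨ht, Finset.mem_univ t⟩, rfl⟩)
  -- the translation of P values to evaluations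
  have hg : ∀ J : Finset (Fin (n + 1)), P (∑ j ∈ J, c j) = g J := by
    intro J
    have h := eval_indicator hev (fun _ => 0) J
    simp only [zero_smul, Finset.sum_const_zero, zero_add, Nat.cast_zero] at h
    exact h
  -- the vanishing identity
  have V0 := AS_vanish hp (T := (univ : Finset (Fin (n + 1)))) (by simp) (fun _ => 0)
  simp only [Nat.cast_zero, zero_add, Finset.card_univ, Fintype.card_fin] at V0
  rw [huniv] at V0
  rw [Finset.sum_powerset_insert (by simp only [Finset.mem_insert, not_or]; exact ⟨hil, him⟩)] at V0
  rw [Finset.sum_powerset_insert hlm, Finset.sum_powerset_insert hlm] at V0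
  rw [powerset_map, Finset.sum_map, Finset.sum_map, Finset.sum_map, Finset.sum_map] at V0
  rw [← Finset.sum_add_distrib, ← Finset.sum_add_distrib, ← Finset.sum_add_distrib] at V0
  simp only [RelEmbedding.coe_toEmbedding, Finset.mapEmbedding_apply] at V0
  have V : ∑ I ∈ D.powerset,
      ((-1 : ℝ) ^ (n + 1 - (I.map ce).card) * g (I.map ce)
        + (-1 : ℝ) ^ (n + 1 - (insert ℓ (I.map ce)).card) * g (insert ℓ (I.map ce))
        + ((-1 : ℝ) ^ (n + 1 - (insert i' (I.map ce)).card) * g (insert i' (I.map ce))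
          + (-1 : ℝ) ^ (n + 1 - (insert i' (insert ℓ (I.map ce))).card) *
              g (insert i' (insert ℓ (I.map ce))))) = 0 := V0
  have hmap : ∀ I : Finset (Fin n), ∑ j ∈ I.map ce, c j = ∑ t ∈ I, b t := by
    intro I
    rw [Finset.sum_map]
    refine Finset.sum_congr rfl fun t _ => ?_
    show c (Fin.castSucc t) = b t
    rw [hcdef]
    simp
  have hci : c i' = b i := by rw [hcdef, hi'def]; simp
  have hcl : c ℓ = y := by rw [hcdef, hldef]; simp
  have hbi : b i = x := by rw [hbdef]; simp
  have hx : ∑ I : Finset (Fin n), (-1 : ℝ) ^ (n - I.card) * P (0 + ∑ j ∈ I, b j)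
      = ∑ I ∈ D.powerset, ((-1 : ℝ) ^ (n - I.card) * g (I.map ce)
          + (-1 : ℝ) ^ (n - (I.card + 1)) * g (insert i' (I.map ce))) := by
    rw [← Finset.powerset_univ, ← hD, Finset.sum_powerset_insert hiD, ← Finset.sum_add_distrib]
    refine Finset.sum_congr rfl fun I hI => ?_
    have hIsub := Finset.mem_powerset.mp hI
    have hIi : i ∉ I := fun h => hiD (hIsub h)
    have hIl : i' ∉ I.map ce := fun h => him (Finset.map_subset_map.mpr hIsub h)
    congr 1
    · rw [zero_add, ← hmap I, hg]
    · rw [Finset.card_insert_of_notMem hIi, zero_add, Finset.sum_insert hIi, ← hg]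
      congr 1
      rw [Finset.sum_insert hIl, hmap I, hci]
  have hy : ∑ I : Finset (Fin n), (-1 : ℝ) ^ (n - I.card) * P (0 + ∑ j ∈ I, Function.update a i y j)
      = ∑ I ∈ D.powerset, ((-1 : ℝ) ^ (n - I.card) * g (I.map ce)
          + (-1 : ℝ) ^ (n - (I.card + 1)) * g (insert ℓ (I.map ce))) := by
    rw [← Finset.powerset_univ, ← hD, Finset.sum_powerset_insert hiD, ← Finset.sum_add_distrib]
    refine Finset.sum_congr rfl fun I hI => ?_
    have hIsub := Finset.mem_powerset.mp hI
    have hIi : i ∉ I := fun h => hiD (hIsub h)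
    have hIl : ℓ ∉ I.map ce := fun h => hlm (Finset.map_subset_map.mpr hIsub h)
    have hupd : ∑ j ∈ I, Function.update a i y j = ∑ j ∈ I, b j := by
      refine Finset.sum_congr rfl fun j hj => ?_
      have hji : j ≠ i := fun h => hIi (h ▸ hj)
      rw [hbdef, Function.update_of_ne hji, Function.update_of_ne hji]
    congr 1
    · rw [zero_add, hupd, ← hmap I, hg]
    · rw [Finset.card_insert_of_notMem hIi, zero_add, Finset.sum_insert hIi, ← hg]
      congr 1
      rw [Finset.sum_insert hIl, hmap I, hcl, hupd, Function.update_self]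
  have hxy : ∑ I : Finset (Fin n), (-1 : ℝ) ^ (n - I.card) *
        P (0 + ∑ j ∈ I, Function.update a i (x + y) j)
      = ∑ I ∈ D.powerset, ((-1 : ℝ) ^ (n - I.card) * g (I.map ce)
          + (-1 : ℝ) ^ (n - (I.card + 1)) * g (insert i' (insert ℓ (I.map ce)))) := by
    rw [← Finset.powerset_univ, ← hD, Finset.sum_powerset_insert hiD, ← Finset.sum_add_distrib]
    refine Finset.sum_congr rfl fun I hI => ?_
    have hIsub := Finset.mem_powerset.mp hI
    have hIi : i ∉ I := fun h => hiD (hIsub h)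
    have hIl : ℓ ∉ I.map ce := fun h => hlm (Finset.map_subset_map.mpr hIsub h)
    have hIl2 : i' ∉ insert ℓ (I.map ce) := by
      simp only [Finset.mem_insert, not_or]
      exact ⟨hil, fun h => him (Finset.map_subset_map.mpr hIsub h)⟩
    have hupd : ∑ j ∈ I, Function.update a i (x + y) j = ∑ j ∈ I, b j := by
      refine Finset.sum_congr rfl fun j hj => ?_
      have hji : j ≠ i := fun h => hIi (h ▸ hj)
      rw [hbdef, Function.update_of_ne hji, Function.update_of_ne hji]
    congr 1
    · rw [zero_add, hupd, ← hmap I, hg]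
    · rw [Finset.card_insert_of_notMem hIi, zero_add, Finset.sum_insert hIi, ← hg]
      congr 1
      rw [Finset.sum_insert hIl2, Finset.sum_insert hIl, hmap I, hci, hcl, hupd,
        Function.update_self, hbi, ← add_assoc]
  rw [hxy, hx, hy, ← Finset.sum_add_distrib, ← sub_eq_zero, ← Finset.sum_sub_distrib, ← V]
  refine Finset.sum_congr rfl fun I hI => ?_
  have hIsub := Finset.mem_powerset.mp hI
  have hIl : ℓ ∉ I.map ce := fun h => hlm (Finset.map_subset_map.mpr hIsub h)
  have hIi' : i' ∉ I.map ce := fun h => him (Finset.map_subset_map.mpr hIsub h)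
  have hIl2 : i' ∉ insert ℓ (I.map ce) := by
    simp only [Finset.mem_insert, not_or]
    exact ⟨hil, hIi'⟩
  have hcard : I.card ≤ n - 1 := hDcard ▸ Finset.card_le_card hIsub
  rw [Finset.card_insert_of_notMem hIl2, Finset.card_insert_of_notMem hIl,
    Finset.card_insert_of_notMem hIi', Finset.card_map]
  obtain ⟨u, h1, h2, h3, h4⟩ : ∃ u, n - (I.card + 1) = u ∧ n - I.card = u + 1 ∧
      n + 1 - I.card = u + 2 ∧ n + 1 - (I.card + 1) = u + 1 := by
    refine ⟨n - (I.card + 1), rfl, ?_, ?_, ?_⟩ <;> omega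
  have h5 : n + 1 - (I.card + 1 + 1) = u := by omega
  rw [h1, h2, h3, h4, h5]
  ring



end PolarizationAux



/-- A function `P : S → ℝ` on a commutative monoid `S` is a *homogeneous polynomial
of degree `n` on `S`* if for every tuple `(a₁, …, a_m)` of elements of `S` there is
a homogeneous real polynomial `p` of degree `n` in `m` variables such that
`P (k₁ • a₁ + ⋯ + k_m • a_m) = p (k₁, …, k_m)` for all nonnegative integers `kᵢ`. -/
def IsHomogeneousPolynomialOn {S : Type*} [AddCommMonoid S] (n : ℕ) (P : S → ℝ) : Prop :=
  ∀ (m : ℕ) (a : Fin m → S), ∃ p : MvPolynomial (Fin m) ℝ, p.IsHomogeneous n ∧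
    ∀ k : Fin m → ℕ, P (∑ i, k i • a i) = MvPolynomial.eval (fun i => (k i : ℝ)) p

/-- The candidate polarization: `(1/n!) ∑_{I ⊆ {1,…,n}} (-1)^{n - |I|} P (x + ∑_{i ∈ I} aᵢ)`,
with an auxiliary base point `x ∈ S`. -/
noncomputable def polarCandidate {S : Type*} [AddCommMonoid S] (n : ℕ) (P : S → ℝ)
    (x : S) (a : Fin n → S) : ℝ :=
  (n.factorial : ℝ)⁻¹ *
    ∑ I : Finset (Fin n), (-1 : ℝ) ^ (n - I.card) * P (x + ∑ i ∈ I, a i)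

/-- For a homogeneous polynomial `P` of degree `n` on `S`, the quantity
`(1/n!) ∑_{I ⊆ {1,…,n}} (-1)^{n-|I|} P (x + ∑_{i ∈ I} aᵢ)` is independent of the
choice of `x ∈ S`, and the resulting function of `(a₁, …, a_n)` is an
`n`-polarization of `P`: it agrees with `P` on the diagonal, is symmetric under
permutations of its arguments, and is additive in each argument. -/
theorem polarization_exists {S : Type*} [AddCommMonoid S] (n : ℕ) (hn : 1 ≤ n)
    (P : S → ℝ) (hP : IsHomogeneousPolynomialOn n P) :
    (∀ (x y : S) (a : Fin n → S), polarCandidate n P x a = polarCandidate n P y a) ∧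
    (∀ a : S, polarCandidate n P 0 (fun _ => a) = P a) ∧
    (∀ (σ : Equiv.Perm (Fin n)) (a : Fin n → S),
      polarCandidate n P 0 (a ∘ σ) = polarCandidate n P 0 a) ∧
    (∀ (a : Fin n → S) (i : Fin n) (x y : S),
      polarCandidate n P 0 (Function.update a i (x + y)) =
        polarCandidate n P 0 (Function.update a i x) +
          polarCandidate n P 0 (Function.update a i y)) := by
  constructor
  · intro x y a
    unfold polarCandidate
    rw [PolarizationAux.part1 n P hP x y a]
  refine ⟨?_, ?_, ?_⟩
  · intro a
    have h := PolarizationAux.part2 n P hP a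
    unfold polarCandidate
    convert h using 3
  · intro σ a
    unfold polarCandidate
    rw [PolarizationAux.part3 n P σ a]
  · intro a i x y
    unfold polarCandidate
    rw [PolarizationAux.part4 n hn P hP a i x y, mul_add]
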